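/- Let M be a complex spin factor with conjugation x ↦ x̄ and triple product {x,y,z} = ⟨x,y⟩z + ⟨z,y⟩x − ⟨x,z̄⟩ȳ. Let U : M_ℝ → M_ℝ be a surjective real-linear isometry of the real Hilbert space M_ℝ, let λ ∈ ℂ with |λ| = 1, and define T : M → M by T(a + ib) = λ(U(a) + iU(b)) for a, b ∈ M_ℝ. Then T is a complex-linear bijection satisfying T{x,y,z} = {T(x), T(y), T(z)} for all x, y, z ∈ M. -/

import Mathlib

/-- The spin factor triple product `{x,y,z} = ⟨x,y⟩z + ⟨z,y⟩x − ⟨x,z̄⟩ȳ` on a complex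
Hilbert space `M` with conjugation `c`.  Here the paper's inner product `⟨x,y⟩`, linear in
the first variable, equals Mathlib's `⟪y, x⟫`. -/
noncomputable def spinTriple {M : Type*} [NormedAddCommGroup M] [InnerProductSpace ℂ M]
    (c : M → M) (x y z : M) : M :=
  (inner ℂ y x : ℂ) • z + (inner ℂ y z : ℂ) • x - (inner ℂ (c z) x : ℂ) • c y

/-- A unimodular multiple of a surjective real-linear isometry of the real part of a spin
factor extends to a complex-linear triple automorphism. -/
theorem stmt_16 {M : Type*} [NormedAddCommGroup M] [InnerProductSpace ℂ M] (c : M → M)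
    (hadd : ∀ x y, c (x + y) = c x + c y)
    (hsmul : ∀ (t : ℂ) (x : M), c (t • x) = (starRingEnd ℂ t) • c x)
    (hinv : ∀ x, c (c x) = x)
    (hinner : ∀ x y, (inner ℂ (c x) (c y) : ℂ) = starRingEnd ℂ (inner ℂ x y))
    (U : M → M) (l : ℂ) (hl : ‖l‖ = 1)
    (hUadd : ∀ x y, U (x + y) = U x + U y)
    (hUsmul : ∀ (r : ℝ) (x : M), U (r • x) = r • U x)
    (hUreal : ∀ x, c x = x → c (U x) = U x)
    (hUiso : ∀ x, c x = x → ‖U x‖ = ‖x‖)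
    (hUsurj : ∀ y, c y = y → ∃ x, c x = x ∧ U x = y)
    (T : M → M)
    (hT : ∀ a b : M, c a = a → c b = b → T (a + Complex.I • b) = l • (U a + Complex.I • U b)) :
    (∀ x y, T (x + y) = T x + T y) ∧
    (∀ (t : ℂ) (x : M), T (t • x) = t • T x) ∧
    Function.Bijective T ∧
    (∀ x y z, T (spinTriple c x y z) = spinTriple c (T x) (T y) (T z)) := by
  -- |l| = 1 consequences
  have hll : (starRingEnd ℂ l) * l = 1 := by
    have h1 : (starRingEnd ℂ l) * l = (Complex.normSq l : ℂ) := by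
      rw [mul_comm]; exact Complex.mul_conj l
    rw [h1, Complex.normSq_eq_norm_sq, hl]; norm_num
  have hl0 : l ≠ 0 := by
    intro h; rw [h] at hl; simp at hl
  -- basic conjugation facts
  have hc0 : c 0 = 0 := by simpa using hsmul 0 0
  have hcneg : ∀ x, c (-x) = - c x := by
    intro x; have := hsmul (-1) x; simpa using this
  have hcsub : ∀ x y, c (x - y) = c x - c y := by
    intro x y; rw [sub_eq_add_neg, hadd, hcneg, sub_eq_add_neg]
  have hcr : ∀ (r : ℝ) (x : M), c (r • x) = r • c x := by
    intro r x
    rw [← algebraMap_smul ℂ r x, hsmul]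
    simp [algebraMap_smul]
  -- basic U facts
  have hU0 : U 0 = 0 := by simpa using hUsmul 0 0
  have hUneg : ∀ x, U (-x) = - U x := by
    intro x; have := hUsmul (-1) x; simpa using this
  have hUsub : ∀ x y, U (x - y) = U x - U y := by
    intro x y; rw [sub_eq_add_neg, hUadd, hUneg, sub_eq_add_neg]
  -- decomposition into real and imaginary parts
  have hdecomp : ∀ x : M, ∃ a b : M, c a = a ∧ c b = b ∧ x = a + Complex.I • b := by
    intro x
    refine ⟨(2⁻¹ : ℂ) • (x + c x), ((2⁻¹ : ℂ) * Complex.I) • (c x - x), ?_, ?_, ?_⟩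
    · rw [hsmul, hadd, hinv]
      have : (starRingEnd ℂ) (2⁻¹ : ℂ) = 2⁻¹ := by simp [map_ofNat]
      rw [this, add_comm]
    · rw [hsmul, hcsub, hinv]
      have : (starRingEnd ℂ) ((2⁻¹ : ℂ) * Complex.I) = -((2⁻¹ : ℂ) * Complex.I) := by
        simp [map_ofNat]
      rw [this, neg_smul, ← smul_neg, neg_sub]
    · rw [smul_smul]
      have : Complex.I * ((2⁻¹ : ℂ) * Complex.I) = -(2⁻¹ : ℂ) := by
        linear_combination (2⁻¹ : ℂ) * Complex.I_mul_I
      rw [this]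
      module
  -- uniqueness kernel
  have himzero : ∀ a b : M, c a = a → c b = b → a + Complex.I • b = 0 → a = 0 ∧ b = 0 := by
    intro a b ha hb h
    have h2 : a - Complex.I • b = 0 := by
      have h3 := congrArg c h
      rwa [hadd, ha, hsmul, hb, Complex.conj_I, hc0, neg_smul, ← sub_eq_add_neg] at h3
    have ha0 : a = 0 := by
      have h4 : a = (2⁻¹ : ℂ) • ((a + Complex.I • b) + (a - Complex.I • b)) := by module
      rw [h, h2] at h4; simpa using h4
    rw [ha0, zero_add] at h
    rcases smul_eq_zero.mp h with h' | h'
    · exact absurd h' Complex.I_ne_zero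
    · exact ⟨ha0, h'⟩
  -- additivity
  have hTadd : ∀ x y, T (x + y) = T x + T y := by
    intro x y
    obtain ⟨a, b, ha, hb, hx⟩ := hdecomp x
    obtain ⟨a', b', ha', hb', hy⟩ := hdecomp y
    have hxy : x + y = (a + a') + Complex.I • (b + b') := by rw [hx, hy]; module
    rw [hxy, hx, hy, hT _ _ ha hb, hT _ _ ha' hb',
        hT _ _ (by rw [hadd, ha, ha']) (by rw [hadd, hb, hb']), hUadd, hUadd]
    module
  -- complex homogeneity
  have key : ∀ (t : ℂ) (u v : M), t • (u + Complex.I • v)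
      = (t.re • u - t.im • v) + Complex.I • (t.im • u + t.re • v) := by
    intro t u v
    match_scalars
    · simp [Complex.ext_iff]
    · simp [Complex.ext_iff]
  have hTsmul : ∀ (t : ℂ) (x : M), T (t • x) = t • T x := by
    intro t x
    obtain ⟨a, b, ha, hb, hx⟩ := hdecomp x
    have h1 : c (t.re • a - t.im • b) = t.re • a - t.im • b := by
      rw [hcsub, hcr, hcr, ha, hb]
    have h2 : c (t.im • a + t.re • b) = t.im • a + t.re • b := by
      rw [hadd, hcr, hcr, ha, hb]
    rw [hx, key, hT _ _ h1 h2, hT _ _ ha hb, hUsub, hUsmul, hUsmul, hUadd,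
        hUsmul, hUsmul, ← key t (U a) (U b)]
    rw [smul_comm]
  have hTsub : ∀ x y, T (x - y) = T x - T y := by
    intro x y
    rw [sub_eq_add_neg, hTadd, show -y = (-1 : ℂ) • y by simp, hTsmul]
    simp [sub_eq_add_neg]
  -- injectivity
  have hTzero : ∀ x, T x = 0 → x = 0 := by
    intro x hx0
    obtain ⟨a, b, ha, hb, hx⟩ := hdecomp x
    rw [hx, hT _ _ ha hb] at hx0
    have h1 : U a + Complex.I • U b = 0 := by
      rcases smul_eq_zero.mp hx0 with h | h
      · exact absurd h hl0
      · exact h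
    obtain ⟨hUa, hUb⟩ := himzero _ _ (hUreal a ha) (hUreal b hb) h1
    have ha0 : a = 0 := norm_eq_zero.mp (by rw [← hUiso a ha, hUa, norm_zero])
    have hb0 : b = 0 := norm_eq_zero.mp (by rw [← hUiso b hb, hUb, norm_zero])
    rw [hx, ha0, hb0]; simp
  -- surjectivity
  have hTsurj : Function.Surjective T := by
    intro y
    obtain ⟨a, b, ha, hb, hy⟩ := hdecomp ((starRingEnd ℂ l) • y)
    obtain ⟨a₀, ha₀, hUa₀⟩ := hUsurj a ha
    obtain ⟨b₀, hb₀, hUb₀⟩ := hUsurj b hb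
    refine ⟨a₀ + Complex.I • b₀, ?_⟩
    rw [hT _ _ ha₀ hb₀, hUa₀, hUb₀, ← hy, smul_smul, mul_comm l, hll, one_smul]
  -- inner products on real points are real
  have him0 : ∀ a b : M, c a = a → c b = b → (inner ℂ a b : ℂ).im = 0 := by
    intro a b ha hb
    have h1 := hinner a b
    rw [ha, hb] at h1
    have h2 := congrArg Complex.im h1
    simp only [Complex.conj_im] at h2
    linarith
  -- U preserves real parts of inner products on real points
  have hre : ∀ a b : M, c a = a → c b = b →
      (inner ℂ (U a) (U b) : ℂ).re = (inner ℂ a b : ℂ).re := by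
    intro a b ha hb
    have h1 := @norm_add_sq ℂ M _ _ _ (U a) (U b)
    have h2 := @norm_add_sq ℂ M _ _ _ a b
    rw [← hUadd, hUiso _ (by rw [hadd, ha, hb]), hUiso a ha, hUiso b hb, h2] at h1
    have h3 : RCLike.re (inner ℂ (U a) (U b) : ℂ) = RCLike.re (inner ℂ a b : ℂ) := by
      linarith
    simpa using h3
  have hUinner : ∀ a b : M, c a = a → c b = b →
      (inner ℂ (U a) (U b) : ℂ) = inner ℂ a b := by
    intro a b ha hb
    apply Complex.ext
    · exact hre a b ha hb
    · rw [him0 _ _ (hUreal a ha) (hUreal b hb), him0 _ _ ha hb]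
  -- T preserves the full inner product
  have hTinner : ∀ x y, (inner ℂ (T x) (T y) : ℂ) = inner ℂ x y := by
    intro x y
    obtain ⟨a, b, ha, hb, hx⟩ := hdecomp x
    obtain ⟨a', b', ha', hb', hy⟩ := hdecomp y
    rw [hx, hy, hT _ _ ha hb, hT _ _ ha' hb', inner_smul_left, inner_smul_right,
        ← mul_assoc, hll, one_mul]
    simp only [inner_add_left, inner_add_right, inner_smul_left, inner_smul_right,
      Complex.conj_I]
    rw [hUinner a a' ha ha', hUinner a b' ha hb', hUinner b a' hb ha',
        hUinner b b' hb hb']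
  -- conjugation intertwining
  have hcT : ∀ x, c (T x) = ((starRingEnd ℂ l) ^ 2) • T (c x) := by
    intro x
    obtain ⟨a, b, ha, hb, hx⟩ := hdecomp x
    have hcx : c x = a + Complex.I • ((-1 : ℝ) • b) := by
      rw [hx, hadd, ha, hsmul, hb, Complex.conj_I]
      simp
    have hb' : c ((-1 : ℝ) • b) = (-1 : ℝ) • b := by rw [hcr, hb]
    rw [hcx, hx, hT _ _ ha hb, hT _ _ ha hb', hUsmul, hsmul, hadd,
        hUreal a ha, hsmul, hUreal b hb, Complex.conj_I, smul_smul]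
    have hco : (starRingEnd ℂ l) ^ 2 * l = starRingEnd ℂ l := by
      linear_combination (starRingEnd ℂ l) * hll
    rw [hco]
    match_scalars <;> simp
  refine ⟨hTadd, hTsmul, ⟨fun x y hxy => ?_, hTsurj⟩, ?_⟩
  · have h1 : T (x - y) = 0 := by rw [hTsub, hxy, sub_self]
    exact sub_eq_zero.mp (hTzero _ h1)
  · intro x y z
    unfold spinTriple
    rw [hTsub, hTadd, hTsmul, hTsmul, hTsmul, hTinner y x, hTinner y z]
    have h3 : (inner ℂ (c (T z)) (T x) : ℂ) • c (T y)
        = (inner ℂ (c z) x : ℂ) • T (c y) := by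
      rw [hcT z, hcT y, inner_smul_left, hTinner, smul_smul]
      congr 1
      rw [map_pow, Complex.conj_conj]
      linear_combination (inner ℂ (c z) x : ℂ) * (l * (starRingEnd ℂ l) + 1) * hll
    rw [h3]
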